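/- The priority order on words over a finite priority alphabet is a well-quasi-order. -/

import Mathlib

/-- The priority embedding underlying the priority order: `u = u₁…u_k`,
`v = v₁u₁v₂u₂…v_ku_k` where each `vᵢ` consists of letters of priority at most
that of `uᵢ`. -/
inductive PrioEmb {α : Type*} (prio : α → ℕ) : List α → List α → Prop
  | nil : PrioEmb prio [] []
  | cons (a : α) {u v : List α} (w : List α) (hw : ∀ b ∈ w, prio b ≤ prio a)
      (h : PrioEmb prio u v) : PrioEmb prio (a :: u) (w ++ a :: v)

/-- The priority order: `u ⊑ v` iff `u = ε`, or `u = u₁…u_k` and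
`v = v₁u₁…v_ku_k` with each `vᵢ` over letters of priority at most that of `uᵢ`. -/
def PrioLE {α : Type*} (prio : α → ℕ) (u v : List α) : Prop :=
  u = [] ∨ PrioEmb prio u v

namespace PrioAux

variable {α : Type*} (prio : α → ℕ)

lemma emb_nil {v : List α} (h : PrioEmb prio [] v) : v = [] := by
  cases h; rfl

lemma emb_refl : ∀ u : List α, PrioEmb prio u u
  | [] => PrioEmb.nil
  | a :: u => PrioEmb.cons a [] (by simp) (emb_refl u)

lemma emb_cons_inv {a : α} {u v : List α} (h : PrioEmb prio (a :: u) v) :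
    ∃ w v', v = w ++ a :: v' ∧ (∀ b ∈ w, prio b ≤ prio a) ∧ PrioEmb prio u v' := by
  cases h with
  | cons _ w hw h => exact ⟨w, _, rfl, hw, h⟩

lemma emb_nil_right {u : List α} (h : PrioEmb prio u []) : u = [] := by
  cases u with
  | nil => rfl
  | cons a u =>
      obtain ⟨w, v', hv, -, -⟩ := emb_cons_inv prio h
      exact absurd hv (by simp)

lemma emb_append {u v u' v' : List α} (h : PrioEmb prio u v) (h' : PrioEmb prio u' v') :
    PrioEmb prio (u ++ u') (v ++ v') := by
  induction h with
  | nil => simpa using h'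
  | cons a w hw h ih =>
      rw [List.cons_append, List.append_assoc, List.cons_append]
      exact PrioEmb.cons a w hw ih

lemma emb_bound {u v : List α} {p : ℕ} (h : PrioEmb prio u v)
    (hu : ∀ b ∈ u, prio b ≤ p) : ∀ c ∈ v, prio c ≤ p := by
  induction h with
  | nil => simp
  | cons a w hw h ih =>
      intro c hc
      rcases List.mem_append.1 hc with hc | hc
      · exact (hw c hc).trans (hu a (by simp))
      · rcases List.mem_cons.1 hc with rfl | hc
        · exact hu c (by simp)
        · exact ih (fun b hb => hu b (by simp [hb])) c hc

lemma emb_append_inv : ∀ (s : List α) {t w : List α}, PrioEmb prio (s ++ t) w →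
    ∃ ws wt, w = ws ++ wt ∧ PrioEmb prio s ws ∧ PrioEmb prio t wt := by
  intro s
  induction s with
  | nil => exact fun h => ⟨[], _, rfl, PrioEmb.nil, h⟩
  | cons a s ih =>
      intro t w h
      obtain ⟨w₁, v₁, rfl, hw₁, h'⟩ := emb_cons_inv prio h
      obtain ⟨ws, wt, rfl, hs, ht⟩ := ih h'
      exact ⟨w₁ ++ a :: ws, wt, by simp, PrioEmb.cons a w₁ hw₁ hs, ht⟩

lemma emb_trans {u v w : List α} (h₁ : PrioEmb prio u v) (h₂ : PrioEmb prio v w) :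
    PrioEmb prio u w := by
  induction h₁ generalizing w with
  | nil => rw [emb_nil prio h₂]; exact PrioEmb.nil
  | cons a wb hwb h ih =>
      obtain ⟨ws, wt, rfl, hA, hB⟩ := emb_append_inv prio wb h₂
      obtain ⟨w₂, w₃, rfl, hw₂, hC⟩ := emb_cons_inv prio hB
      rw [← List.append_assoc]
      refine PrioEmb.cons a (ws ++ w₂) ?_ (ih hC)
      intro b hb
      rcases List.mem_append.1 hb with hb | hb
      · exact emb_bound prio hA hwb b hb
      · exact hw₂ b hb

lemma emb_absorb {c : α} {u v : List α} (w : List α) (h : PrioEmb prio (c :: u) v)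
    (hw : ∀ b ∈ w, prio b ≤ prio c) : PrioEmb prio (c :: u) (w ++ v) := by
  obtain ⟨w₁, v₁, rfl, hw₁, h'⟩ := emb_cons_inv prio h
  rw [← List.append_assoc]
  refine PrioEmb.cons c (w ++ w₁) ?_ h'
  intro b hb
  rcases List.mem_append.1 hb with hb | hb
  · exact hw b hb
  · exact hw₁ b hb

/-- Embedding into a prefix. -/
def Pre (u v : List α) : Prop := ∃ v₁ v₂, v = v₁ ++ v₂ ∧ PrioLE prio u v₁

lemma pre_refl (u : List α) : Pre prio u u :=
  ⟨u, [], by simp, Or.inr (emb_refl prio u)⟩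

lemma prioLE_pre {u v : List α} (h : PrioLE prio u v) : Pre prio u v :=
  ⟨v, [], by simp, h⟩

lemma pre_trans {u v w : List α} (h₁ : Pre prio u v) (h₂ : Pre prio v w) :
    Pre prio u w := by
  obtain ⟨p, s, rfl, hp⟩ := h₁
  obtain ⟨p', s', rfl, hp'⟩ := h₂
  rcases hp with rfl | hp
  · exact ⟨p', s', rfl, Or.inl rfl⟩
  rcases hp' with h | hp'
  · obtain ⟨h1, h2⟩ := List.append_eq_nil_iff.1 h
    subst h1
    exact ⟨p', s', rfl, Or.inl (emb_nil_right prio hp)⟩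
  · obtain ⟨wp, ws, rfl, hA, hB⟩ := emb_append_inv prio p hp'
    exact ⟨wp, ws ++ s', by simp, Or.inr (emb_trans prio hp hA)⟩

lemma glue_pre {x y : List α} {c : α} {u v : List α} (hx : Pre prio x y)
    (h : PrioEmb prio (c :: u) v) (hy : ∀ b ∈ y, prio b ≤ prio c) :
    PrioEmb prio (x ++ c :: u) (y ++ v) := by
  obtain ⟨p, s, rfl, hp⟩ := hx
  rcases hp with rfl | hp
  · rw [List.nil_append]
    rw [List.append_assoc] at *
    exact emb_absorb prio p (emb_absorb prio s h
      (fun b hb => hy b (by simp [hb]))) (fun b hb => hy b (by simp [hb]))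
  · rw [List.append_assoc]
    exact emb_append prio hp (emb_absorb prio s h (fun b hb => hy b (by simp [hb])))

/-- Reassemble a list of chunks `(a, x)` into the word `a₁x₁a₂x₂…`. -/
def chunks : List (α × List α) → List α
  | [] => []
  | p :: l => p.1 :: (p.2 ++ chunks l)

lemma chunks_append (l₁ l₂ : List (α × List α)) :
    chunks (l₁ ++ l₂) = chunks l₁ ++ chunks l₂ := by
  induction l₁ with
  | nil => simp [chunks]
  | cons p l ih => simp [chunks, ih]

lemma mem_chunks {l : List (α × List α)} {p : α × List α} (hp : p ∈ l) :
    ∀ b, (b = p.1 ∨ b ∈ p.2) → b ∈ chunks l := by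
  induction l with
  | nil => simp at hp
  | cons q l ih =>
      intro b hb
      rcases List.mem_cons.1 hp with rfl | hp
      · rcases hb with rfl | hb
        · simp [chunks]
        · simp [chunks, hb]
      · simp [chunks, ih hp b hb]

lemma chunks_bound {D : ℕ} {l : List (α × List α)}
    (hl : ∀ q ∈ l, prio q.1 ≤ D ∧ ∀ b ∈ q.2, prio b ≤ D) :
    ∀ b ∈ chunks l, prio b ≤ D := by
  induction l with
  | nil => simp [chunks]
  | cons q l ih =>
      intro b hb
      rcases List.mem_cons.1 hb with rfl | hb
      · exact (hl q (by simp)).1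
      · rcases List.mem_append.1 hb with hb | hb
        · exact (hl q (by simp)).2 b hb
        · exact ih (fun q hq => hl q (by simp [hq])) b hb

lemma chunks_head {D : ℕ} (l : List (α × List α)) (a : α) (t : List α)
    (hl : ∀ p ∈ l, prio p.1 = D) (ha : prio a = D) :
    ∃ c rest, chunks l ++ a :: t = c :: rest ∧ prio c = D := by
  cases l with
  | nil => exact ⟨a, t, rfl, ha⟩
  | cons p l => exact ⟨p.1, p.2 ++ chunks l ++ a :: t, by simp [chunks], hl p (by simp)⟩

/-- The relation on chunks used for Higman's lemma. -/
def RP : (α × List α) → (α × List α) → Prop :=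
  fun p q => p.1 = q.1 ∧ Pre prio p.2 q.2

instance : IsRefl (α × List α) (RP prio) := ⟨fun p => ⟨rfl, pre_refl prio p.2⟩⟩

instance : IsTrans (α × List α) (RP prio) :=
  ⟨fun _ _ _ h₁ h₂ => ⟨h₁.1.trans h₂.1, pre_trans prio h₁.2 h₂.2⟩⟩

instance : IsPreorder (α × List α) (RP prio) where
  toRefl := inferInstance
  toIsTrans := inferInstance

instance : IsPreorder (List (α × List α)) (List.SublistForall₂ (RP prio)) where
  toRefl := inferInstance
  toIsTrans := inferInstance

lemma glue {D : ℕ} {l l' : List (α × List α)} (h : List.SublistForall₂ (RP prio) l l')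
    (hl : ∀ p ∈ l, prio p.1 = D)
    (hl' : ∀ q ∈ l', prio q.1 ≤ D ∧ ∀ b ∈ q.2, prio b ≤ D) :
    ∀ {r r' : List α}, PrioEmb prio r r' → ∀ {a : α} {t : List α}, r = a :: t →
      prio a = D → PrioEmb prio (chunks l ++ r) (chunks l' ++ r') := by
  induction h with
  | nil =>
      intro r r' hr a t hrat ha
      subst hrat
      show PrioEmb prio ([] ++ a :: t) _
      rw [List.nil_append]
      refine emb_absorb prio _ hr ?_
      intro b hb
      rw [ha]
      exact chunks_bound prio hl' b hb
  | @cons p q l₁ l₁' hpq hsub ih =>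
      intro r r' hr a t hrat ha
      subst hrat
      obtain ⟨c, rest, hcr, hc⟩ := chunks_head prio l₁ a t
        (fun p hp => hl p (by simp [hp])) ha
      have E : PrioEmb prio (chunks l₁ ++ a :: t) (chunks l₁' ++ r') :=
        ih (fun p hp => hl p (by simp [hp])) (fun q hq => hl' q (by simp [hq])) hr rfl ha
      show PrioEmb prio (p.1 :: (p.2 ++ chunks l₁) ++ a :: t)
        (q.1 :: (q.2 ++ chunks l₁') ++ r')
      rw [hpq.1]
      have key : PrioEmb prio (p.2 ++ (chunks l₁ ++ a :: t)) (q.2 ++ (chunks l₁' ++ r')) := by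
        rw [hcr] at E ⊢
        refine glue_pre prio hpq.2 E ?_
        intro b hb
        rw [hc]
        exact (hl' q (by simp)).2 b hb
      have final := PrioEmb.cons (prio := prio) q.1 [] (by simp) key
      simpa [List.append_assoc] using final
  | @cons_right q l₁ l₁' hsub ih =>
      intro r r' hr a t hrat ha
      subst hrat
      obtain ⟨c, rest, hcr, hc⟩ := chunks_head prio l₁ a t hl ha
      have E : PrioEmb prio (chunks l₁ ++ a :: t) (chunks l₁' ++ r') :=
        ih hl (fun q hq => hl' q (by simp [hq])) hr rfl ha
      show PrioEmb prio (chunks l₁ ++ a :: t) (q.1 :: (q.2 ++ chunks l₁') ++ r')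
      rw [hcr] at E ⊢
      have key : PrioEmb prio (c :: rest) ((q.1 :: q.2) ++ (chunks l₁' ++ r')) := by
        refine emb_absorb prio _ E ?_
        intro b hb
        rw [hc]
        rcases List.mem_cons.1 hb with rfl | hb
        · exact (hl' q (by simp)).1
        · exact (hl' q (by simp)).2 b hb
      simpa [List.append_assoc] using key

lemma assemble {D : ℕ} {x₀ x₀' : List α} {l l' : List (α × List α)} {a a' : α}
    {x x' : List α}
    (h0 : Pre prio x₀ x₀') (hs : List.SublistForall₂ (RP prio) l l')
    (ha : a = a') (hx : PrioEmb prio x x')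
    (hl : ∀ p ∈ l, prio p.1 = D)
    (hl' : ∀ q ∈ l', prio q.1 ≤ D ∧ ∀ b ∈ q.2, prio b ≤ D)
    (hpa : prio a = D) (hx0' : ∀ b ∈ x₀', prio b ≤ D) :
    PrioEmb prio (x₀ ++ (chunks l ++ a :: x)) (x₀' ++ (chunks l' ++ a' :: x')) := by
  subst ha
  have hr : PrioEmb prio (a :: x) (a :: x') := by
    have := PrioEmb.cons (prio := prio) a [] (by simp) hx
    simpa using this
  have E : PrioEmb prio (chunks l ++ a :: x) (chunks l' ++ a :: x') :=
    glue prio hs hl hl' hr rfl hpa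
  obtain ⟨c, rest, hcr, hc⟩ := chunks_head prio l a x hl hpa
  rw [hcr] at E ⊢
  exact glue_pre prio h0 E (fun b hb => hc ▸ hx0' b hb)

/-- Split a word at its letters of priority `D`:
returns the leading low part and the chunks. -/
def split (D : ℕ) : List α → List α × List (α × List α)
  | [] => ([], [])
  | c :: t =>
      if prio c = D then ([], (c, (split D t).1) :: (split D t).2)
      else (c :: (split D t).1, (split D t).2)

lemma split_spec (D : ℕ) : ∀ w : List α, (split prio D w).1 ++ chunks (split prio D w).2 = w := by
  intro w
  induction w with
  | nil => simp [split, chunks]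
  | cons c t ih =>
      by_cases h : prio c = D <;> simp [split, h, chunks, ih]

lemma split_fst_prio (D : ℕ) : ∀ w : List α, ∀ b ∈ (split prio D w).1, prio b ≠ D := by
  intro w
  induction w with
  | nil => simp [split]
  | cons c t ih =>
      by_cases h : prio c = D
      · simp only [split, if_pos h]
        simp
      · simp only [split, if_neg h]
        intro b hb
        rcases List.mem_cons.1 hb with rfl | hb
        · exact h
        · exact ih b hb

lemma split_snd_prio (D : ℕ) : ∀ w : List α, ∀ p ∈ (split prio D w).2,
    prio p.1 = D ∧ ∀ b ∈ p.2, prio b ≠ D := by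
  intro w
  induction w with
  | nil => simp [split]
  | cons c t ih =>
      by_cases h : prio c = D
      · simp only [split, if_pos h]
        intro p hp
        rcases List.mem_cons.1 hp with rfl | hp
        · exact ⟨h, split_fst_prio prio D t⟩
        · exact ih p hp
      · simp only [split, if_neg h]
        exact ih

instance : IsRefl (List α) (Pre prio) := ⟨pre_refl prio⟩

instance : IsTrans (List α) (Pre prio) := ⟨fun _ _ _ => pre_trans prio⟩

instance : IsPreorder (List α) (Pre prio) where
  toRefl := inferInstance
  toIsTrans := inferInstance

lemma chunks_eq {l : List (α × List α)} (h : l ≠ []) :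
    chunks l = chunks l.dropLast ++ (l.getLast h).1 :: (l.getLast h).2 := by
  conv_lhs => rw [← List.dropLast_append_getLast h]
  rw [chunks_append]
  simp [chunks]

lemma split_decomp (D : ℕ) (w : List α) (hne : (split prio D w).2 ≠ []) :
    (split prio D w).1 ++ (chunks ((split prio D w).2.dropLast) ++
      (((split prio D w).2.getLast hne).1 :: ((split prio D w).2.getLast hne).2)) = w := by
  have h1 := split_spec prio D w
  rw [chunks_eq hne] at h1
  exact h1

lemma mem_of_fst {D : ℕ} {w : List α} {b : α} (hb : b ∈ (split prio D w).1) : b ∈ w := by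
  rw [← split_spec prio D w]
  exact List.mem_append_left _ hb

lemma mem_of_snd {D : ℕ} {w : List α} {p : α × List α} (hp : p ∈ (split prio D w).2)
    {b : α} (hb : b = p.1 ∨ b ∈ p.2) : b ∈ w := by
  rw [← split_spec prio D w]
  exact List.mem_append_right _ (mem_chunks hp b hb)

end PrioAux

/-- The priority order on words over a finite priority alphabet is a
well-quasi-order. -/
theorem prioLE_wqo {α : Type*} [Finite α] (prio : α → ℕ)
    (f : ℕ → List α) : ∃ i j : ℕ, i < j ∧ PrioLE prio (f i) (f j) := by
  classical
  obtain ⟨B, hB⟩ := (Set.finite_range prio).bddAbove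
  have key : ∀ D : ℕ, ∀ f : ℕ → List α, (∀ n, ∀ a ∈ f n, prio a < D) →
      ∃ i j : ℕ, i < j ∧ PrioLE prio (f i) (f j) := by
    intro D
    induction D with
    | zero =>
        intro f hf
        refine ⟨0, 1, Nat.zero_lt_one, Or.inl ?_⟩
        cases h : f 0 with
        | nil => rfl
        | cons c t => exact absurd (hf 0 c (by rw [h]; simp)) (by omega)
    | succ D IH =>
        intro f hf
        set low : Set (List α) := {w : List α | ∀ b ∈ w, prio b < D} with hlowdef
        have pwoLow : low.PartiallyWellOrderedOn (PrioLE prio) :=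
          Set.partiallyWellOrderedOn_iff_exists_lt.2 fun g hg => IH g hg
        have pwoPre : low.PartiallyWellOrderedOn (PrioAux.Pre prio) := by
          refine Set.partiallyWellOrderedOn_iff_exists_lt.2 ?_
          intro g hg
          obtain ⟨i, j, hij, h⟩ := pwoLow.exists_lt hg
          exact ⟨i, j, hij, PrioAux.prioLE_pre prio h⟩
        have pwoEmb : low.PartiallyWellOrderedOn (PrioEmb prio) := by
          refine Set.partiallyWellOrderedOn_iff_exists_lt.2 ?_
          intro g hg
          by_cases hev : ∃ N, ∀ n, N ≤ n → g n ≠ []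
          · obtain ⟨N, hN⟩ := hev
            obtain ⟨i, j, hij, h⟩ := pwoLow.exists_lt (f := fun n => g (N + n)) (fun n => hg _)
            rcases h with h | h
            · exact absurd h (hN _ (Nat.le_add_right _ _))
            · exact ⟨N + i, N + j, by omega, h⟩
          · push_neg at hev
            obtain ⟨n₀, hn₀, h₀⟩ := hev 0
            obtain ⟨n₁, hn₁, h₁⟩ := hev (n₀ + 1)
            exact ⟨n₀, n₁, by omega, by rw [h₀, h₁]; exact PrioEmb.nil⟩
        have pwoEq : (Set.univ : Set α).PartiallyWellOrderedOn (· = ·) :=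
          Set.finite_univ.partiallyWellOrderedOn
        have pwoRP : ((Set.univ : Set α) ×ˢ low).PartiallyWellOrderedOn (PrioAux.RP prio) :=
          pwoEq.prod pwoPre
        have pwoHig := Set.PartiallyWellOrderedOn.partiallyWellOrderedOn_sublistForall₂
          (PrioAux.RP prio) pwoRP
        have pwoLast : ((Set.univ : Set α) ×ˢ low).PartiallyWellOrderedOn
            (fun p q => p.1 = q.1 ∧ PrioEmb prio p.2 q.2) := pwoEq.prod pwoEmb
        have pwoBig := pwoPre.prod (pwoHig.prod pwoLast)
        set S : Set ℕ := {n | (PrioAux.split prio D (f n)).2 = []} with hSdef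
        by_cases hSinf : S.Infinite
        · haveI := Set.infinite_coe_iff.2 hSinf
          let g := Nat.orderEmbeddingOfSet S
          have hg : ∀ n, g n ∈ S := fun n => by
            have h1 : g n ∈ Set.range (Nat.orderEmbeddingOfSet S) := Set.mem_range_self n
            rwa [Nat.orderEmbeddingOfSet_range] at h1
          have hmem : ∀ n : ℕ, ∀ a ∈ f (g n), prio a < D := by
            intro n a ha
            have h2 : (PrioAux.split prio D (f (g n))).2 = [] := hg n
            have hspec := PrioAux.split_spec prio D (f (g n))
            rw [h2] at hspec
            have ha' : a ∈ (PrioAux.split prio D (f (g n))).1 := by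
              rw [← hspec] at ha
              simpa [PrioAux.chunks] using ha
            have hne := PrioAux.split_fst_prio prio D (f (g n)) a ha'
            have hlt := hf (g n) a ha
            omega
          obtain ⟨i, j, hij, h⟩ := IH (fun n => f (g n)) hmem
          exact ⟨g i, g j, g.strictMono hij, h⟩
        · have hTinf : Sᶜ.Infinite := (Set.not_infinite.1 hSinf).infinite_compl
          haveI := Set.infinite_coe_iff.2 hTinf
          let g := Nat.orderEmbeddingOfSet Sᶜ
          have hg : ∀ n, g n ∈ Sᶜ := fun n => by
            have h1 : g n ∈ Set.range (Nat.orderEmbeddingOfSet Sᶜ) := Set.mem_range_self n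
            rwa [Nat.orderEmbeddingOfSet_range] at h1
          have hne : ∀ n, (PrioAux.split prio D (f (g n))).2 ≠ [] := fun n => hg n
          have hmemf : ∀ n b, b ∈ f (g n) → prio b ≤ D := fun n b hb => by
            have := hf (g n) b hb; omega
          have hmem : ∀ n : ℕ, ((PrioAux.split prio D (f (g n))).1,
              ((PrioAux.split prio D (f (g n))).2.dropLast,
               (PrioAux.split prio D (f (g n))).2.getLast (hne n))) ∈
              (low ×ˢ ({l : List (α × List α) | ∀ x ∈ l, x ∈ (Set.univ : Set α) ×ˢ low} ×ˢ
                ((Set.univ : Set α) ×ˢ low))) := by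
            intro n
            refine ⟨?_, ?_, Set.mem_univ _, ?_⟩
            · intro b hb
              have h1 := PrioAux.split_fst_prio prio D (f (g n)) b hb
              have h2 := hf (g n) b (PrioAux.mem_of_fst prio hb)
              omega
            · intro p hp
              have hp' := (List.dropLast_sublist _).subset hp
              refine ⟨Set.mem_univ _, ?_⟩
              intro b hb
              have h1 := (PrioAux.split_snd_prio prio D (f (g n)) p hp').2 b hb
              have h2 := hf (g n) b (PrioAux.mem_of_snd prio hp' (Or.inr hb))
              omega
            · intro b hb
              have hp' := List.getLast_mem (hne n)
              have h1 := (PrioAux.split_snd_prio prio D (f (g n)) _ hp').2 b hb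
              have h2 := hf (g n) b (PrioAux.mem_of_snd prio hp' (Or.inr hb))
              omega
          obtain ⟨i, j, hij, hR⟩ := pwoBig.exists_lt (f := fun n => ((PrioAux.split prio D (f (g n))).1,
              ((PrioAux.split prio D (f (g n))).2.dropLast,
               (PrioAux.split prio D (f (g n))).2.getLast (hne n)))) hmem
          obtain ⟨h0, hs, ha, hx⟩ := hR
          refine ⟨g i, g j, g.strictMono hij, Or.inr ?_⟩
          rw [← PrioAux.split_decomp prio D (f (g i)) (hne i),
            ← PrioAux.split_decomp prio D (f (g j)) (hne j)]
          refine PrioAux.assemble prio (D := D) h0 hs ha hx ?_ ?_ ?_ ?_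
          · intro p hp
            exact (PrioAux.split_snd_prio prio D (f (g i)) p
              ((List.dropLast_sublist _).subset hp)).1
          · intro q hq
            have hq' := (List.dropLast_sublist _).subset hq
            refine ⟨le_of_eq (PrioAux.split_snd_prio prio D (f (g j)) q hq').1, ?_⟩
            intro b hb
            exact hmemf j b (PrioAux.mem_of_snd prio hq' (Or.inr hb))
          · exact (PrioAux.split_snd_prio prio D (f (g i)) _
              (List.getLast_mem (hne i))).1
          · intro b hb
            exact hmemf j b (PrioAux.mem_of_fst prio hb)
  refine key (B + 1) f ?_
  intro n a ha
  have : prio a ≤ B := hB (Set.mem_range_self a)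
  omega
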